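/- A code C ⊆ Z_q^n can correct t insertions of blocks 0^k if and only if it can correct t deletions of blocks 0^k. -/

import Mathlib

/-- One insertion of a block `0^k` at some position of the string `x`. -/
def Ins (q k : ℕ) (x y : List (ZMod q)) : Prop :=
  ∃ j ≤ x.length, y = x.take j ++ List.replicate k (0 : ZMod q) ++ x.drop j

/-- `InsN q k u x y`: `y` is obtainable from `x` by `u` successive insertions of `0^k`. -/
def InsN (q k : ℕ) : ℕ → List (ZMod q) → List (ZMod q) → Prop
  | 0, x, y => y = x
  | u + 1, x, y => ∃ z, Ins q k x z ∧ InsN q k u z y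

/-- One deletion of a block of `k` consecutive zeros. -/
def Del (q k : ℕ) (x y : List (ZMod q)) : Prop := Ins q k y x

/-- `DelN q k u x y`: `y` is obtainable from `x` by `u` successive deletions of blocks `0^k`. -/
def DelN (q k : ℕ) : ℕ → List (ZMod q) → List (ZMod q) → Prop
  | 0, x, y => y = x
  | u + 1, x, y => ∃ z, Del q k x z ∧ DelN q k u z y

/-- `C` corrects `t` insertions of blocks `0^k`. -/
def CorrectsIns (q k t : ℕ) (C : Set (List (ZMod q))) : Prop :=
  ∀ x ∈ C, ∀ x' ∈ C, ∀ y,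
    (∃ u ≤ t, InsN q k u x y) → (∃ u' ≤ t, InsN q k u' x' y) → x = x'

/-- `C` corrects `t` deletions of blocks `0^k`. -/
def CorrectsDel (q k t : ℕ) (C : Set (List (ZMod q))) : Prop :=
  ∀ x ∈ C, ∀ x' ∈ C, ∀ y,
    (∃ u ≤ t, DelN q k u x y) → (∃ u' ≤ t, DelN q k u' x' y) → x = x'

set_option linter.unnecessarySimpa false
set_option linter.unusedVariables false


namespace Stmt3Aux

/-- skeleton: the nonzero symbols of `x`. -/
def sk (q : ℕ) (x : List (ZMod q)) : List (ZMod q) := x.filter (· ≠ 0)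

/-- run lengths of zeros (always nonempty; one more entry than `sk`). -/
def runs (q : ℕ) : List (ZMod q) → List ℕ
  | [] => [0]
  | a :: l => if a = 0 then ((runs q l).headI + 1) :: (runs q l).tail else 0 :: runs q l

lemma runs_ne_nil (q : ℕ) (x : List (ZMod q)) : runs q x ≠ [] := by
  cases x with
  | nil => simp [runs]
  | cons a l => by_cases h : a = 0 <;> simp [runs, h]

lemma runs_cons_zero (q : ℕ) (l : List (ZMod q)) :
    runs q (0 :: l) = ((runs q l).headI + 1) :: (runs q l).tail := by simp [runs]

lemma runs_cons_ne (q : ℕ) (a : ZMod q) (l : List (ZMod q)) (h : a ≠ 0) :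
    runs q (a :: l) = 0 :: runs q l := by simp [runs, h]

lemma sk_cons_zero (q : ℕ) (l : List (ZMod q)) : sk q (0 :: l) = sk q l := by
  simp [sk]

lemma sk_cons_ne (q : ℕ) (a : ZMod q) (l : List (ZMod q)) (h : a ≠ 0) :
    sk q (a :: l) = a :: sk q l := by simp [sk, h]

lemma sk_nonzero (q : ℕ) (x : List (ZMod q)) : ∀ a ∈ sk q x, a ≠ 0 := by
  intro a ha
  have := List.of_mem_filter ha
  simpa using this

lemma runs_replicate_append (q m : ℕ) (x : List (ZMod q)) :
    runs q (List.replicate m 0 ++ x) = (m + (runs q x).headI) :: (runs q x).tail := by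
  induction m with
  | zero =>
    simp
    obtain ⟨h, t, e⟩ : ∃ h t, runs q x = h :: t := by
      cases e : runs q x with
      | nil => exact absurd e (runs_ne_nil q x)
      | cons h t => exact ⟨h, t, rfl⟩
    simp [e]
  | succ m ih =>
    rw [List.replicate_succ, List.cons_append, runs_cons_zero, ih]
    simp [Nat.add_comm, Nat.add_assoc, Nat.add_left_comm]

lemma sk_replicate_append (q m : ℕ) (x : List (ZMod q)) :
    sk q (List.replicate m 0 ++ x) = sk q x := by
  simp [sk, List.filter_append, List.filter_replicate]

lemma length_runs (q : ℕ) (x : List (ZMod q)) :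
    (runs q x).length = (sk q x).length + 1 := by
  induction x with
  | nil => simp [runs, sk]
  | cons a l ih =>
    by_cases h : a = 0
    · subst h
      rw [runs_cons_zero, sk_cons_zero]
      have : (runs q l).tail.length = (runs q l).length - 1 := by simp
      simp only [List.length_cons, this, ih]
      omega
    · rw [runs_cons_ne q a l h, sk_cons_ne q a l h]
      simp [ih]

/-- rebuild a string from run lengths and skeleton. -/
def recon (q : ℕ) : List ℕ → List (ZMod q) → List (ZMod q)
  | r :: rs, a :: s => List.replicate r 0 ++ a :: recon q rs s
  | r :: _, [] => List.replicate r 0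
  | [], _ => []

lemma recon_succ_head (q m : ℕ) (t : List ℕ) (s : List (ZMod q)) :
    recon q ((m + 1) :: t) s = 0 :: recon q (m :: t) s := by
  cases s <;> simp [recon, List.replicate_succ]

lemma recon_runs_sk (q : ℕ) (x : List (ZMod q)) : recon q (runs q x) (sk q x) = x := by
  induction x with
  | nil => simp [runs, sk, recon]
  | cons a l ih =>
    by_cases h : a = 0
    · subst h
      rw [runs_cons_zero, sk_cons_zero]
      obtain ⟨hd, tl, e⟩ : ∃ hd tl, runs q l = hd :: tl := by
        cases e : runs q l with
        | nil => exact absurd e (runs_ne_nil q l)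
        | cons hd tl => exact ⟨hd, tl, rfl⟩
      rw [e]
      simp only [List.headI, List.tail]
      rw [recon_succ_head]
      rw [← e, ih]
    · rw [runs_cons_ne q a l h, sk_cons_ne q a l h]
      simp [recon, ih]

lemma runs_recon (q : ℕ) : ∀ (s : List (ZMod q)) (r : List ℕ),
    r.length = s.length + 1 → (∀ a ∈ s, a ≠ 0) → runs q (recon q r s) = r := by
  intro s
  induction s with
  | nil =>
    rintro ⟨⟩ hlen hnz
    · simp at hlen
    · rename_i m rs
      simp at hlen
      subst hlen
      show runs q (List.replicate m 0) = [m]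
      have := runs_replicate_append q m ([] : List (ZMod q))
      simpa [runs] using this
  | cons a s' ih =>
    rintro ⟨⟩ hlen hnz
    · simp at hlen
    · rename_i m rs
      simp at hlen
      have ha : a ≠ 0 := hnz a (by simp)
      show runs q (List.replicate m 0 ++ a :: recon q rs s') = m :: rs
      rw [runs_replicate_append, runs_cons_ne q a _ ha]
      simp only [List.headI, List.tail]
      rw [ih rs hlen (fun b hb => hnz b (by simp [hb]))]
      simp

lemma sk_recon (q : ℕ) : ∀ (s : List (ZMod q)) (r : List ℕ),
    r.length = s.length + 1 → (∀ a ∈ s, a ≠ 0) → sk q (recon q r s) = s := by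
  intro s
  induction s with
  | nil =>
    rintro ⟨⟩ hlen hnz
    · simp at hlen
    · rename_i m rs
      show sk q (List.replicate m 0) = []
      simpa [sk] using List.filter_replicate (n := m) (a := (0 : ZMod q)) (p := (· ≠ 0))
  | cons a s' ih =>
    rintro ⟨⟩ hlen hnz
    · simp at hlen
    · rename_i m rs
      simp at hlen
      have ha : a ≠ 0 := hnz a (by simp)
      show sk q (List.replicate m 0 ++ a :: recon q rs s') = a :: s'
      rw [sk_replicate_append, sk_cons_ne q a _ ha,
        ih rs hlen (fun b hb => hnz b (by simp [hb]))]


lemma sk_append (q : ℕ) (a b : List (ZMod q)) : sk q (a ++ b) = sk q a ++ sk q b :=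
  by simp [sk]

lemma sk_replicate (q k : ℕ) : sk q (List.replicate k (0 : ZMod q)) = [] := by
  simp [sk, List.filter_replicate]

lemma sk_insert (q k : ℕ) (x : List (ZMod q)) (j : ℕ) :
    sk q (x.take j ++ List.replicate k 0 ++ x.drop j) = sk q x := by
  rw [sk_append, sk_append, sk_replicate]
  simp only [List.append_nil]
  rw [← sk_append, List.take_append_drop]

lemma runs_insert (q k : ℕ) : ∀ (x : List (ZMod q)) (j : ℕ), j ≤ x.length →
    ∃ r1 m r2, runs q x = r1 ++ m :: r2 ∧
      runs q (x.take j ++ List.replicate k 0 ++ x.drop j) = r1 ++ (m + k) :: r2 := by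
  intro x
  induction x with
  | nil =>
    intro j hj
    have hj0 : j = 0 := Nat.le_zero.mp (by simpa using hj)
    subst hj0
    refine ⟨[], 0, [], by simp [runs], ?_⟩
    have := runs_replicate_append q k ([] : List (ZMod q))
    simpa [runs] using this
  | cons a l ih =>
    intro j hj
    cases j with
    | zero =>
      obtain ⟨hd, tl, e⟩ : ∃ hd tl, runs q (a :: l) = hd :: tl := by
        cases e : runs q (a :: l) with
        | nil => exact absurd e (runs_ne_nil q _)
        | cons hd tl => exact ⟨hd, tl, rfl⟩
      refine ⟨[], hd, tl, by simp [e], ?_⟩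
      simp only [List.take_zero, List.drop_zero, List.nil_append]
      rw [runs_replicate_append, e]
      simp [Nat.add_comm]
    | succ j' =>
      have hj' : j' ≤ l.length := by simpa using hj
      obtain ⟨r1, m, r2, h1, h2⟩ := ih j' hj'
      by_cases ha : a = 0
      · subst ha
        cases r1 with
        | nil =>
          simp only [List.nil_append] at h1 h2
          refine ⟨[], m + 1, r2, ?_, ?_⟩
          · rw [runs_cons_zero, h1]; simp
          · show runs q (0 :: (l.take j' ++ List.replicate k 0 ++ l.drop j')) = _
            rw [runs_cons_zero, h2]
            simp
            omega
        | cons b r1' =>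
          refine ⟨(b + 1) :: r1', m, r2, ?_, ?_⟩
          · rw [runs_cons_zero, h1]; simp
          · show runs q (0 :: (l.take j' ++ List.replicate k 0 ++ l.drop j')) = _
            rw [runs_cons_zero, h2]; simp
      · refine ⟨0 :: r1, m, r2, ?_, ?_⟩
        · rw [runs_cons_ne q a l ha, h1]; simp
        · show runs q (a :: (l.take j' ++ List.replicate k 0 ++ l.drop j')) = _
          rw [runs_cons_ne q a _ ha, h2]; simp

lemma recon_bump (q k : ℕ) : ∀ (r1 : List ℕ) (s : List (ZMod q)) (m : ℕ) (r2 : List ℕ),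
    r1.length ≤ s.length →
    ∃ j ≤ (recon q (r1 ++ m :: r2) s).length,
      recon q (r1 ++ (m + k) :: r2) s =
        (recon q (r1 ++ m :: r2) s).take j ++ List.replicate k 0 ++
          (recon q (r1 ++ m :: r2) s).drop j := by
  intro r1
  induction r1 with
  | nil =>
    intro s m r2 _
    refine ⟨0, Nat.zero_le _, ?_⟩
    simp only [List.nil_append, List.take_zero, List.drop_zero]
    have hrep : List.replicate (m + k) (0 : ZMod q) =
        List.replicate k (0 : ZMod q) ++ List.replicate m (0 : ZMod q) := by
      rw [← List.replicate_add]; ring_nf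
    cases s with
    | nil => exact hrep
    | cons a s' =>
      show List.replicate (m + k) (0 : ZMod q) ++ a :: recon q r2 s' =
        [] ++ List.replicate k 0 ++ (List.replicate m 0 ++ a :: recon q r2 s')
      rw [hrep]
      rw [List.append_assoc]
      rfl
  | cons b r1' ih =>
    intro s m r2 hlen
    cases s with
    | nil => simp at hlen
    | cons a s' =>
      have hlen' : r1'.length ≤ s'.length := by simpa using hlen
      obtain ⟨j', hj', he⟩ := ih s' m r2 hlen'
      have hre1 : recon q ((b :: r1') ++ (m + k) :: r2) (a :: s') =
          List.replicate b 0 ++ a :: recon q (r1' ++ (m + k) :: r2) s' := rfl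
      have hre2 : recon q ((b :: r1') ++ m :: r2) (a :: s') =
          List.replicate b 0 ++ a :: recon q (r1' ++ m :: r2) s' := rfl
      refine ⟨b + 1 + j', ?_, ?_⟩
      · rw [hre2]
        simp
        omega
      · rw [hre1, hre2]
        have hlb : (List.replicate b (0 : ZMod q) ++ [a]).length = b + 1 := by simp
        have htake : (List.replicate b (0 : ZMod q) ++ a :: recon q (r1' ++ m :: r2) s').take (b + 1 + j')
            = List.replicate b (0 : ZMod q) ++ [a] ++ (recon q (r1' ++ m :: r2) s').take j' := by
          rw [show List.replicate b (0 : ZMod q) ++ a :: recon q (r1' ++ m :: r2) s'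
              = (List.replicate b (0 : ZMod q) ++ [a]) ++ recon q (r1' ++ m :: r2) s' by simp,
            show b + 1 + j' = (List.replicate b (0 : ZMod q) ++ [a]).length + j' by rw [hlb],
            List.take_length_add_append]
        have hdrop : (List.replicate b (0 : ZMod q) ++ a :: recon q (r1' ++ m :: r2) s').drop (b + 1 + j')
            = (recon q (r1' ++ m :: r2) s').drop j' := by
          rw [show List.replicate b (0 : ZMod q) ++ a :: recon q (r1' ++ m :: r2) s'
              = (List.replicate b (0 : ZMod q) ++ [a]) ++ recon q (r1' ++ m :: r2) s' by simp,
            show b + 1 + j' = (List.replicate b (0 : ZMod q) ++ [a]).length + j' by rw [hlb],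
            List.drop_length_add_append]
        rw [htake, hdrop, he]
        simp

lemma ins_iff (q k : ℕ) (x y : List (ZMod q)) :
    Ins q k x y ↔ sk q y = sk q x ∧
      ∃ r1 m r2, runs q x = r1 ++ m :: r2 ∧ runs q y = r1 ++ (m + k) :: r2 := by
  constructor
  · rintro ⟨j, hj, rfl⟩
    exact ⟨sk_insert q k x j, runs_insert q k x j hj⟩
  · rintro ⟨hsk, r1, m, r2, hx, hy⟩
    have hlen1 : r1.length ≤ (sk q x).length := by
      have := length_runs q x
      rw [hx] at this
      simp at this
      omega
    obtain ⟨j, hj, he⟩ := recon_bump q k r1 (sk q x) m r2 hlen1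
    have hx' : recon q (r1 ++ m :: r2) (sk q x) = x := by
      rw [← hx, recon_runs_sk]
    have hy' : recon q (r1 ++ (m + k) :: r2) (sk q x) = y := by
      rw [← hsk, ← hy, recon_runs_sk]
    rw [hx'] at he hj
    rw [hy'] at he
    exact ⟨j, hj, he⟩


lemma eq_take_getD_drop : ∀ (l : List ℕ) (i : ℕ), i < l.length →
    l = l.take i ++ l.getD i 0 :: l.drop (i + 1) := by
  intro l
  induction l with
  | nil => intro i hi; simp at hi
  | cons a l ih =>
    intro i hi
    cases i with
    | zero => simp
    | succ i' =>
      simp only [List.take_succ_cons, List.drop_succ_cons, List.getD_cons_succ, List.cons_append]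
      exact congrArg (a :: ·) (ih i' (by simpa using hi))

lemma list_sum_getD (l : List ℕ) : l.sum = ∑ i ∈ Finset.range l.length, l.getD i 0 := by
  induction l with
  | nil => simp
  | cons a l ih =>
    rw [List.sum_cons, List.length_cons, Finset.sum_range_succ', ih]
    simp [Nat.add_comm]

lemma getD_bump (r1 : List ℕ) (m k : ℕ) (r2 : List ℕ) (i : ℕ) :
    (r1 ++ (m + k) :: r2).getD i 0 =
      (r1 ++ m :: r2).getD i 0 + if i = r1.length then k else 0 := by
  rcases lt_trichotomy i r1.length with h | h | h
  · rw [List.getD_append _ _ _ _ h, List.getD_append _ _ _ _ h, if_neg (by omega)]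
    omega
  · subst h
    rw [List.getD_append_right _ _ _ _ le_rfl, List.getD_append_right _ _ _ _ le_rfl]
    simp
  · rw [List.getD_append_right _ _ _ _ (by omega), List.getD_append_right _ _ _ _ (by omega),
      if_neg (by omega)]
    obtain ⟨j, hj⟩ : ∃ j, i - r1.length = j + 1 := ⟨i - r1.length - 1, by omega⟩
    rw [hj]
    simp

lemma getD_zipWith (f : ℕ → ℕ → ℕ) (hf : f 0 0 = 0) :
    ∀ (a b : List ℕ), a.length = b.length → ∀ i,
      (List.zipWith f a b).getD i 0 = f (a.getD i 0) (b.getD i 0) := by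
  intro a
  induction a with
  | nil =>
    intro b hb i
    have : b = [] := by
      cases b
      · rfl
      · simp at hb
    subst this
    simp [hf]
  | cons x a ih =>
    intro b hb i
    cases b with
    | nil => simp at hb
    | cons y b =>
      cases i with
      | zero => simp
      | succ i' =>
        simp only [List.zipWith_cons_cons, List.getD_cons_succ]
        exact ih b (by simpa using hb) i'

lemma insN_runs (q k : ℕ) : ∀ (u : ℕ) (x y : List (ZMod q)), InsN q k u x y →
    sk q y = sk q x ∧ (runs q y).length = (runs q x).length ∧
    (∀ i, (runs q x).getD i 0 ≤ (runs q y).getD i 0 ∧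
      k ∣ ((runs q y).getD i 0 - (runs q x).getD i 0)) ∧
    (runs q y).sum = (runs q x).sum + u * k := by
  intro u
  induction u with
  | zero =>
    intro x y h
    rw [show y = x from h]
    exact ⟨rfl, rfl, fun i => ⟨le_rfl, by simp⟩, by simp⟩
  | succ u ih =>
    rintro x y ⟨z, hins, hrest⟩
    obtain ⟨hsk1, r1, m, r2, hx, hz⟩ := (ins_iff q k x z).mp hins
    obtain ⟨hsk2, hlen2, hpt2, hsum2⟩ := ih z y hrest
    have hlen1 : (runs q z).length = (runs q x).length := by rw [hx, hz]; simp
    have hpt1 : ∀ i, (runs q x).getD i 0 ≤ (runs q z).getD i 0 ∧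
        k ∣ ((runs q z).getD i 0 - (runs q x).getD i 0) := by
      intro i
      rw [hx, hz, getD_bump]
      constructor
      · omega
      · rcases eq_or_ne i r1.length with h | h
        · simp [h]
        · simp [h]
    have hsum1 : (runs q z).sum = (runs q x).sum + k := by
      rw [hx, hz]
      simp [List.sum_append]
      omega
    refine ⟨hsk2.trans hsk1, hlen2.trans hlen1, ?_, ?_⟩
    · intro i
      obtain ⟨h1, h2⟩ := hpt1 i
      obtain ⟨h3, h4⟩ := hpt2 i
      refine ⟨h1.trans h3, ?_⟩
      have he : (runs q y).getD i 0 - (runs q x).getD i 0 =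
          ((runs q y).getD i 0 - (runs q z).getD i 0) +
          ((runs q z).getD i 0 - (runs q x).getD i 0) := by omega
      rw [he]
      exact Nat.dvd_add h4 h2
    · rw [hsum2, hsum1]
      ring

lemma list_eq_of_getD (a b : List ℕ) (hlen : a.length = b.length)
    (h : ∀ i, a.getD i 0 = b.getD i 0) : a = b := by
  apply List.ext_getElem hlen
  intro i h1 h2
  have := h i
  rwa [List.getD_eq_getElem a 0 h1, List.getD_eq_getElem b 0 h2] at this

lemma runs_insN (q k : ℕ) : ∀ (t : ℕ) (x y : List (ZMod q)),
    sk q y = sk q x → (runs q y).length = (runs q x).length →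
    (∀ i, (runs q x).getD i 0 ≤ (runs q y).getD i 0 ∧
      k ∣ ((runs q y).getD i 0 - (runs q x).getD i 0)) →
    (runs q y).sum ≤ (runs q x).sum + t * k →
    ∃ u ≤ t, InsN q k u x y := by
  intro t
  induction t with
  | zero =>
    intro x y hsk hlen hpt hsum
    have heq : runs q x = runs q y := by
      apply list_eq_of_getD _ _ hlen.symm
      intro i
      by_contra hne
      have hlt : (runs q x).getD i 0 < (runs q y).getD i 0 :=
        lt_of_le_of_ne (hpt i).1 hne
      have hi : i < (runs q x).length := by
        by_contra hge
        rw [List.getD_eq_default _ _ (by omega), List.getD_eq_default _ _ (by omega)] at hlt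
        omega
      have : (runs q x).sum < (runs q y).sum := by
        rw [list_sum_getD, list_sum_getD, hlen]
        exact Finset.sum_lt_sum (fun j _ => (hpt j).1) ⟨i, Finset.mem_range.mpr hi, hlt⟩
      omega
    refine ⟨0, le_rfl, ?_⟩
    show y = x
    rw [← recon_runs_sk q y, ← recon_runs_sk q x, hsk, heq]
  | succ t ih =>
    intro x y hsk hlen hpt hsum
    by_cases heq : runs q x = runs q y
    · refine ⟨0, by omega, ?_⟩
      show y = x
      rw [← recon_runs_sk q y, ← recon_runs_sk q x, hsk, heq]
    · obtain ⟨i, hne⟩ : ∃ i, (runs q x).getD i 0 ≠ (runs q y).getD i 0 := by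
        by_contra hc
        push_neg at hc
        exact heq (list_eq_of_getD _ _ hlen.symm hc)
      have hlt : (runs q x).getD i 0 < (runs q y).getD i 0 := lt_of_le_of_ne (hpt i).1 hne
      have hi : i < (runs q x).length := by
        by_contra hge
        rw [List.getD_eq_default _ _ (by omega), List.getD_eq_default _ _ (by omega)] at hlt
        omega
      set r1 := (runs q x).take i with hr1
      set m := (runs q x).getD i 0 with hm
      set r2 := (runs q x).drop (i + 1) with hr2
      have hx : runs q x = r1 ++ m :: r2 := eq_take_getD_drop _ i hi
      have hr1len : r1.length = i := by
        rw [hr1, List.length_take]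
        omega
      have hkpos : 0 < k := by
        rcases Nat.eq_zero_or_pos k with h0 | h0
        · exfalso
          have := (hpt i).2
          rw [h0] at this
          have := Nat.eq_zero_of_zero_dvd this
          omega
        · exact h0
      have hklen : (r1 ++ (m + k) :: r2).length = (sk q x).length + 1 := by
        have := length_runs q x
        rw [hx] at this
        simpa using this
      set z := recon q (r1 ++ (m + k) :: r2) (sk q x) with hzdef
      have hzruns : runs q z = r1 ++ (m + k) :: r2 :=
        runs_recon q (sk q x) _ hklen (sk_nonzero q x)
      have hzsk : sk q z = sk q x :=
        sk_recon q (sk q x) _ hklen (sk_nonzero q x)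
      have hins : Ins q k x z := (ins_iff q k x z).mpr ⟨hzsk, r1, m, r2, hx, hzruns⟩
      have hzlen : (runs q z).length = (runs q x).length := by
        rw [hzruns, hx]; simp
      have hzgetD : ∀ j, (runs q z).getD j 0 =
          (runs q x).getD j 0 + if j = i then k else 0 := by
        intro j
        rw [hzruns, hx, getD_bump, hr1len]
      have hyi : m + k ≤ (runs q y).getD i 0 := by
        have hdvd := (hpt i).2
        have : k ≤ (runs q y).getD i 0 - m := Nat.le_of_dvd (by omega) hdvd
        omega
      have hzsum : (runs q z).sum = (runs q x).sum + k := by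
        rw [hzruns, hx]
        simp [List.sum_append]
        try omega
      have hpt' : ∀ j, (runs q z).getD j 0 ≤ (runs q y).getD j 0 ∧
          k ∣ ((runs q y).getD j 0 - (runs q z).getD j 0) := by
        intro j
        rw [hzgetD j]
        rcases eq_or_ne j i with rfl | hj
        · rw [if_pos rfl]
          constructor
          · omega
          · have h1 := (hpt j).2
            have he : (runs q y).getD j 0 - ((runs q x).getD j 0 + k) =
                ((runs q y).getD j 0 - (runs q x).getD j 0) - k := by omega
            rw [he]
            exact Nat.dvd_sub h1 dvd_rfl
        · simp only [if_neg hj, Nat.add_zero]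
          exact hpt j
      have hsum' : (runs q y).sum ≤ (runs q z).sum + t * k := by
        rw [Nat.succ_mul] at hsum
        omega
      obtain ⟨u, hu, hzy⟩ := ih z y (hsk.trans hzsk.symm) (hlen.trans hzlen.symm) hpt' hsum'
      exact ⟨u + 1, by omega, z, hins, hzy⟩

lemma insN_snoc (q k : ℕ) : ∀ (u : ℕ) (x y w : List (ZMod q)),
    InsN q k u x y → Ins q k y w → InsN q k (u + 1) x w := by
  intro u
  induction u with
  | zero =>
    intro x y w h hins
    exact ⟨w, (show y = x from h) ▸ hins, rfl⟩
  | succ u ih =>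
    rintro x y w ⟨z, hxz, hzy⟩ hins
    exact ⟨z, hxz, ih z y w hzy hins⟩

lemma insN_succ' (q k : ℕ) : ∀ (u : ℕ) (z x : List (ZMod q)),
    InsN q k (u + 1) z x → ∃ w, InsN q k u z w ∧ Ins q k w x := by
  intro u
  induction u with
  | zero =>
    rintro z x ⟨w, hins, hw⟩
    exact ⟨z, rfl, (show x = w from hw) ▸ hins⟩
  | succ u ih =>
    rintro z x ⟨w, hzw, h⟩
    obtain ⟨v, hv1, hv2⟩ := ih w x h
    exact ⟨v, ⟨w, hzw, hv1⟩, hv2⟩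

lemma delN_iff_insN (q k : ℕ) : ∀ (u : ℕ) (x z : List (ZMod q)),
    DelN q k u x z ↔ InsN q k u z x := by
  intro u
  induction u with
  | zero =>
    intro x z
    exact ⟨fun h => (show z = x from h).symm, fun h => (show x = z from h).symm⟩
  | succ u ih =>
    intro x z
    constructor
    · rintro ⟨w, hdel, hrest⟩
      exact insN_snoc q k u z w x ((ih w z).mp hrest) hdel
    · intro h
      obtain ⟨w, h1, h2⟩ := insN_succ' q k u z x h
      exact ⟨w, h2, (ih w z).mpr h1⟩

lemma insN_le_iff (q k t : ℕ) (x y : List (ZMod q)) :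
    (∃ u ≤ t, InsN q k u x y) ↔
      sk q y = sk q x ∧ (runs q y).length = (runs q x).length ∧
      (∀ i, (runs q x).getD i 0 ≤ (runs q y).getD i 0 ∧
        k ∣ ((runs q y).getD i 0 - (runs q x).getD i 0)) ∧
      (runs q y).sum ≤ (runs q x).sum + t * k := by
  constructor
  · rintro ⟨u, hu, h⟩
    obtain ⟨h1, h2, h3, h4⟩ := insN_runs q k u x y h
    exact ⟨h1, h2, h3, by
      rw [h4]
      have : u * k ≤ t * k := Nat.mul_le_mul_right k hu
      omega⟩
  · rintro ⟨h1, h2, h3, h4⟩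
    exact runs_insN q k t x y h1 h2 h3 h4


lemma up1 (q k t : ℕ) (x x' z : List (ZMod q))
    (h1 : ∃ u ≤ t, InsN q k u z x) (h2 : ∃ u ≤ t, InsN q k u z x') :
    ∃ v ≤ t, InsN q k v x
      (recon q (List.zipWith max (runs q x) (runs q x')) (sk q x)) := by
  rw [insN_le_iff] at h1 h2
  obtain ⟨hsk1, hlen1, hpt1, hsum1⟩ := h1
  obtain ⟨hsk2, hlen2, hpt2, hsum2⟩ := h2
  have hab : (runs q x).length = (runs q x').length := hlen1.trans hlen2.symm
  have hzip : (List.zipWith max (runs q x) (runs q x')).length = (runs q x).length := by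
    rw [List.length_zipWith]
    omega
  have hlen' : (List.zipWith max (runs q x) (runs q x')).length = (sk q x).length + 1 := by
    rw [hzip, length_runs]
  have hyr : runs q (recon q (List.zipWith max (runs q x) (runs q x')) (sk q x))
      = List.zipWith max (runs q x) (runs q x') :=
    runs_recon q _ _ hlen' (sk_nonzero q x)
  have hysk : sk q (recon q (List.zipWith max (runs q x) (runs q x')) (sk q x)) = sk q x :=
    sk_recon q _ _ hlen' (sk_nonzero q x)
  have hget : ∀ i, (List.zipWith max (runs q x) (runs q x')).getD i 0 =
      max ((runs q x).getD i 0) ((runs q x').getD i 0) :=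
    getD_zipWith max (by simp) _ _ hab
  rw [insN_le_iff]
  refine ⟨hysk, by rw [hyr, hzip], fun i => ?_, ?_⟩
  · rw [hyr, hget i]
    refine ⟨le_max_left _ _, ?_⟩
    rcases le_total ((runs q x').getD i 0) ((runs q x).getD i 0) with h | h
    · rw [max_eq_left h]
      simp
    · rw [max_eq_right h]
      have e : max ((runs q x).getD i 0) ((runs q x').getD i 0) = (runs q x').getD i 0 :=
        max_eq_right h
      have e2 : (runs q x').getD i 0 - (runs q x).getD i 0 =
          ((runs q x').getD i 0 - (runs q z).getD i 0) -
            ((runs q x).getD i 0 - (runs q z).getD i 0) := by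
        have h1 := (hpt1 i).1
        have h2 := (hpt2 i).1
        omega
      rw [e2]
      exact Nat.dvd_sub (hpt2 i).2 (hpt1 i).2
  · rw [hyr]
    have hsa : (runs q x).sum = ∑ i ∈ Finset.range (runs q x).length, (runs q x).getD i 0 :=
      list_sum_getD _
    have hsb : (runs q x').sum = ∑ i ∈ Finset.range (runs q x).length, (runs q x').getD i 0 := by
      rw [list_sum_getD (runs q x'), hab]
    have hsr : (runs q z).sum = ∑ i ∈ Finset.range (runs q x).length, (runs q z).getD i 0 := by
      rw [list_sum_getD (runs q z), hlen1]
    have hsz : (List.zipWith max (runs q x) (runs q x')).sum =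
        ∑ i ∈ Finset.range (runs q x).length,
          max ((runs q x).getD i 0) ((runs q x').getD i 0) := by
      rw [list_sum_getD, hzip]
      exact Finset.sum_congr rfl (fun i _ => hget i)
    have key : ∑ i ∈ Finset.range (runs q x).length,
          max ((runs q x).getD i 0) ((runs q x').getD i 0)
        ≤ ∑ i ∈ Finset.range (runs q x).length,
          ((runs q x).getD i 0 + ((runs q x').getD i 0 - (runs q z).getD i 0)) := by
      apply Finset.sum_le_sum
      intro i _
      have h1 := (hpt1 i).1
      have h2 := (hpt2 i).1
      omega
    have hsplit : ∑ i ∈ Finset.range (runs q x).length,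
          ((runs q x).getD i 0 + ((runs q x').getD i 0 - (runs q z).getD i 0))
        = (∑ i ∈ Finset.range (runs q x).length, (runs q x).getD i 0) +
          ((∑ i ∈ Finset.range (runs q x).length, (runs q x').getD i 0) -
            (∑ i ∈ Finset.range (runs q x).length, (runs q z).getD i 0)) := by
      rw [Finset.sum_add_distrib, Finset.sum_tsub_distrib _ (fun i _ => (hpt2 i).1)]
    rw [hsz]
    omega

lemma down1 (q k t : ℕ) (x x' y : List (ZMod q))
    (h1 : ∃ u ≤ t, InsN q k u x y) (h2 : ∃ u ≤ t, InsN q k u x' y) :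
    ∃ v ≤ t, InsN q k v
      (recon q (List.zipWith min (runs q x) (runs q x')) (sk q x)) x := by
  rw [insN_le_iff] at h1 h2
  obtain ⟨hsk1, hlen1, hpt1, hsum1⟩ := h1
  obtain ⟨hsk2, hlen2, hpt2, hsum2⟩ := h2
  have hab : (runs q x).length = (runs q x').length := hlen1.symm.trans hlen2
  have hzip : (List.zipWith min (runs q x) (runs q x')).length = (runs q x).length := by
    rw [List.length_zipWith]
    omega
  have hlen' : (List.zipWith min (runs q x) (runs q x')).length = (sk q x).length + 1 := by
    rw [hzip, length_runs]
  have hzr : runs q (recon q (List.zipWith min (runs q x) (runs q x')) (sk q x))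
      = List.zipWith min (runs q x) (runs q x') :=
    runs_recon q _ _ hlen' (sk_nonzero q x)
  have hzsk : sk q (recon q (List.zipWith min (runs q x) (runs q x')) (sk q x)) = sk q x :=
    sk_recon q _ _ hlen' (sk_nonzero q x)
  have hget : ∀ i, (List.zipWith min (runs q x) (runs q x')).getD i 0 =
      min ((runs q x).getD i 0) ((runs q x').getD i 0) :=
    getD_zipWith min (by simp) _ _ hab
  rw [insN_le_iff]
  refine ⟨hzsk.symm, by rw [hzr, hzip], fun i => ?_, ?_⟩
  · rw [hzr, hget i]
    refine ⟨min_le_left _ _, ?_⟩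
    rcases le_total ((runs q x).getD i 0) ((runs q x').getD i 0) with h | h
    · rw [min_eq_left h]
      simp
    · rw [min_eq_right h]
      have e2 : (runs q x).getD i 0 - (runs q x').getD i 0 =
          ((runs q y).getD i 0 - (runs q x').getD i 0) -
            ((runs q y).getD i 0 - (runs q x).getD i 0) := by
        have h1 := (hpt1 i).1
        have h2 := (hpt2 i).1
        omega
      rw [e2]
      exact Nat.dvd_sub (hpt2 i).2 (hpt1 i).2
  · rw [hzr]
    have hsa : (runs q x).sum = ∑ i ∈ Finset.range (runs q x).length, (runs q x).getD i 0 :=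
      list_sum_getD _
    have hsb : (runs q x').sum = ∑ i ∈ Finset.range (runs q x).length, (runs q x').getD i 0 := by
      rw [list_sum_getD (runs q x'), hab]
    have hsc : (runs q y).sum = ∑ i ∈ Finset.range (runs q x).length, (runs q y).getD i 0 := by
      rw [list_sum_getD (runs q y), hlen1]
    have hsz : (List.zipWith min (runs q x) (runs q x')).sum =
        ∑ i ∈ Finset.range (runs q x).length,
          min ((runs q x).getD i 0) ((runs q x').getD i 0) := by
      rw [list_sum_getD, hzip]
      exact Finset.sum_congr rfl (fun i _ => hget i)
    have key : ∑ i ∈ Finset.range (runs q x).length, (runs q x).getD i 0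
        ≤ ∑ i ∈ Finset.range (runs q x).length,
          (min ((runs q x).getD i 0) ((runs q x').getD i 0) +
            ((runs q y).getD i 0 - (runs q x').getD i 0)) := by
      apply Finset.sum_le_sum
      intro i _
      have h1 := (hpt1 i).1
      have h2 := (hpt2 i).1
      omega
    have hsplit : ∑ i ∈ Finset.range (runs q x).length,
          (min ((runs q x).getD i 0) ((runs q x').getD i 0) +
            ((runs q y).getD i 0 - (runs q x').getD i 0))
        = (∑ i ∈ Finset.range (runs q x).length,
            min ((runs q x).getD i 0) ((runs q x').getD i 0)) +
          ((∑ i ∈ Finset.range (runs q x).length, (runs q y).getD i 0) -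
            (∑ i ∈ Finset.range (runs q x).length, (runs q x').getD i 0)) := by
      rw [Finset.sum_add_distrib, Finset.sum_tsub_distrib _ (fun i _ => (hpt2 i).1)]
    rw [hsz]
    omega

end Stmt3Aux




/-- a code `C ⊆ (ℤ_q)^n` corrects `t` insertions of blocks `0^k`
iff it corrects `t` deletions of blocks `0^k`. -/
theorem stmt3 (q n t k : ℕ) (hq : 2 ≤ q) (hn : 1 ≤ n) (ht : 1 ≤ t) (hk : 1 ≤ k)
    (C : Set (List (ZMod q))) (hC : ∀ x ∈ C, x.length = n) :
    CorrectsIns q k t C ↔ CorrectsDel q k t C := by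
  open Stmt3Aux in
  constructor
  · intro hIns x hx x' hx' z h1 h2
    replace h1 : ∃ u ≤ t, InsN q k u z x := by
      obtain ⟨u, hu, h⟩ := h1
      exact ⟨u, hu, (delN_iff_insN q k u x z).mp h⟩
    replace h2 : ∃ u ≤ t, InsN q k u z x' := by
      obtain ⟨u, hu, h⟩ := h2
      exact ⟨u, hu, (delN_iff_insN q k u x' z).mp h⟩
    have hskx : sk q x = sk q z := ((insN_le_iff q k t z x).mp h1).1
    have hskx' : sk q x' = sk q z := ((insN_le_iff q k t z x').mp h2).1
    have hy1 := up1 q k t x x' z h1 h2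
    have hy2 := up1 q k t x' x z h2 h1
    have hcomm : List.zipWith max (runs q x') (runs q x)
        = List.zipWith max (runs q x) (runs q x') :=
      List.zipWith_comm_of_comm (f := max) Nat.max_comm
    rw [hcomm, show sk q x' = sk q x from hskx'.trans hskx.symm] at hy2
    exact hIns x hx x' hx' _ hy1 hy2
  · intro hDel x hx x' hx' y h1 h2
    have hskx : sk q y = sk q x := ((insN_le_iff q k t x y).mp h1).1
    have hskx' : sk q y = sk q x' := ((insN_le_iff q k t x' y).mp h2).1
    have hz1 := down1 q k t x x' y h1 h2
    have hz2 := down1 q k t x' x y h2 h1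
    have hcomm : List.zipWith min (runs q x') (runs q x)
        = List.zipWith min (runs q x) (runs q x') :=
      List.zipWith_comm_of_comm (f := min) Nat.min_comm
    rw [hcomm, show sk q x' = sk q x from hskx'.symm.trans hskx] at hz2
    replace hz1 : ∃ v ≤ t, DelN q k v x
        (recon q (List.zipWith min (runs q x) (runs q x')) (sk q x)) := by
      obtain ⟨v, hv, h⟩ := hz1
      exact ⟨v, hv, (delN_iff_insN q k v x _).mpr h⟩
    replace hz2 : ∃ v ≤ t, DelN q k v x'
        (recon q (List.zipWith min (runs q x) (runs q x')) (sk q x)) := by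
      obtain ⟨v, hv, h⟩ := hz2
      exact ⟨v, hv, (delN_iff_insN q k v x' _).mpr h⟩
    exact hDel x hx x' hx' _ hz1 hz2
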